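/- Let D ⊆ ℝⁿ be a nonempty (possibly infinite) set of nonzero vectors contained in a nontrivial linear subspace L ⊆ ℝⁿ. Then pspan(D) = L if and only if CM_L(D) > 0. In particular, pspan(D) = span(D) if and only if CM_D(D) > 0. -/

import Mathlib

open scoped RealInnerProductSpace

noncomputable section

/-- The positive span of a set `D`: all finite nonnegative linear combinations
of elements of `D`. -/
def pspan {E : Type*} [AddCommGroup E] [Module ℝ E] (D : Set E) : Set E :=
  {x | ∃ (k : ℕ) (d : Fin k → E) (c : Fin k → ℝ),
    (∀ i, d i ∈ D) ∧ (∀ i, 0 ≤ c i) ∧ x = ∑ i, c i • d i}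

/-- The cosine measure of `D` relative to a subspace `L`:
`min` over unit vectors `u ∈ L` of `sup_{d ∈ D} ⟪u, d⟫ / ‖d‖`. -/
noncomputable def cmRel {E : Type*} [NormedAddCommGroup E] [InnerProductSpace ℝ E]
    (L : Submodule ℝ E) (D : Set E) : ℝ :=
  sInf ((fun u => sSup ((fun d => ⟪u, d⟫ / ‖d‖) '' D)) '' {u : E | u ∈ L ∧ ‖u‖ = 1})

/-- The cosine vector set of `D` relative to a subspace `L`: the set of unit
vectors `u ∈ L` attaining the minimum defining `cmRel L D`. -/
noncomputable def cVRel {E : Type*} [NormedAddCommGroup E] [InnerProductSpace ℝ E]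
    (L : Submodule ℝ E) (D : Set E) : Set E :=
  {u : E | u ∈ L ∧ ‖u‖ = 1 ∧ sSup ((fun d => ⟪u, d⟫ / ‖d‖) '' D) = cmRel L D}

section basic
variable {E : Type*} [AddCommGroup E] [Module ℝ E] {D : Set E}

lemma pspan_zero_mem (D : Set E) : (0 : E) ∈ pspan D :=
  ⟨0, Fin.elim0, Fin.elim0, fun i => i.elim0, fun i => i.elim0, by simp⟩

lemma subset_pspan : D ⊆ pspan D := fun d hd =>
  ⟨1, fun _ => d, fun _ => 1, fun _ => hd, fun _ => zero_le_one, by simp⟩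

lemma pspan_add_mem {x y : E} (hx : x ∈ pspan D) (hy : y ∈ pspan D) :
    x + y ∈ pspan D := by
  obtain ⟨k₁, d₁, c₁, hd₁, hc₁, rfl⟩ := hx
  obtain ⟨k₂, d₂, c₂, hd₂, hc₂, rfl⟩ := hy
  refine ⟨k₁ + k₂, Fin.append d₁ d₂, Fin.append c₁ c₂, ?_, ?_, ?_⟩
  · intro i
    refine Fin.addCases (fun j => ?_) (fun j => ?_) i
    · simpa [Fin.append_left] using hd₁ j
    · simpa [Fin.append_right] using hd₂ j
  · intro i
    refine Fin.addCases (fun j => ?_) (fun j => ?_) i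
    · simpa [Fin.append_left] using hc₁ j
    · simpa [Fin.append_right] using hc₂ j
  · rw [Fin.sum_univ_add]
    simp [Fin.append_left, Fin.append_right]

lemma pspan_smul_mem {a : ℝ} (ha : 0 ≤ a) {x : E} (hx : x ∈ pspan D) :
    a • x ∈ pspan D := by
  obtain ⟨k, d, c, hd, hc, rfl⟩ := hx
  refine ⟨k, d, fun i => a * c i, hd, fun i => mul_nonneg ha (hc i), ?_⟩
  rw [Finset.smul_sum]
  simp [mul_smul]

lemma pspan_convex (D : Set E) : Convex ℝ (pspan D) := fun x hx y hy a b ha hb _ =>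
  pspan_add_mem (pspan_smul_mem ha hx) (pspan_smul_mem hb hy)

lemma pspan_subset {L : Submodule ℝ E} (hDL : D ⊆ (L : Set E)) :
    pspan D ⊆ (L : Set E) := by
  rintro x ⟨k, d, c, hd, hc, rfl⟩
  exact Submodule.sum_mem L fun i _ => Submodule.smul_mem L _ (hDL (hd i))

end basic

section dense
variable {F : Type*} [NormedAddCommGroup F] [NormedSpace ℝ F] [FiniteDimensional ℝ F]

lemma dense_convex_eq_univ {s : Set F} (hs : Convex ℝ s) (hd : closure s = Set.univ) :
    s = Set.univ := by
  have hcl : IsClosed ((affineSpan ℝ s : AffineSubspace ℝ F) : Set F) :=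
    (affineSpan ℝ s).closed_of_finiteDimensional
  have hcoe : ((affineSpan ℝ s : AffineSubspace ℝ F) : Set F) = Set.univ :=
    Set.eq_univ_of_univ_subset (hd ▸ closure_minimal (subset_affineSpan ℝ s) hcl)
  have hspan : affineSpan ℝ s = ⊤ := by
    rw [eq_top_iff]
    intro x _
    have hx : x ∈ ((affineSpan ℝ s : AffineSubspace ℝ F) : Set F) := hcoe ▸ Set.mem_univ x
    exact hx
  obtain ⟨x₀, hx₀⟩ := (hs.interior_nonempty_iff_affineSpan_eq_top).2 hspan
  refine Set.eq_univ_of_forall fun x => ?_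
  have hy : (2 : ℝ) • x - x₀ ∈ closure s := hd ▸ Set.mem_univ _
  have h := hs.combo_interior_closure_mem_interior hx₀ hy (a := 1/2) (b := 1/2)
    (by norm_num) (by norm_num) (by norm_num)
  have hx : x = (1/2 : ℝ) • x₀ + (1/2 : ℝ) • ((2 : ℝ) • x - x₀) := by module
  rw [hx]
  exact interior_subset h

end dense

section transfer
variable {E : Type*} [NormedAddCommGroup E] [InnerProductSpace ℝ E] [FiniteDimensional ℝ E]

lemma pspan_eq_of_closure_eq (D : Set E) (L : Submodule ℝ E)
    (hsub : pspan D ⊆ (L : Set E)) (hcl : closure (pspan D) = (L : Set E)) :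
    pspan D = (L : Set E) := by
  set s : Set ↥L := ((↑) : ↥L → E) ⁻¹' (pspan D) with hs_def
  have hconv : Convex ℝ s := (pspan_convex D).linear_preimage L.subtype
  have hind : Topology.IsInducing ((↑) : ↥L → E) := Topology.IsInducing.subtypeVal
  have himg : ((↑) : ↥L → E) '' s = pspan D := by
    ext x
    constructor
    · rintro ⟨y, hy, rfl⟩; exact hy
    · intro hx; exact ⟨⟨x, hsub hx⟩, hx, rfl⟩
  have hclos : closure s = Set.univ := by
    rw [hind.closure_eq_preimage_closure_image, himg, hcl]
    ext u
    simp [SetLike.coe_mem]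
  have huniv : s = Set.univ := dense_convex_eq_univ hconv hclos
  refine Set.Subset.antisymm hsub fun x hx => ?_
  have : (⟨x, hx⟩ : ↥L) ∈ s := huniv ▸ Set.mem_univ _
  exact this

end transfer

section fsup
variable {E : Type*} [NormedAddCommGroup E] [InnerProductSpace ℝ E]

/-- The inner function whose sup defines the cosine measure. -/
def fsup (D : Set E) (u : E) : ℝ := sSup ((fun d => ⟪u, d⟫ / ‖d‖) '' D)

variable {D : Set E}

lemma norm_pos_of_mem (h0 : (0 : E) ∉ D) {d : E} (hd : d ∈ D) : 0 < ‖d‖ :=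
  norm_pos_iff.mpr (fun h => h0 (h ▸ hd))

lemma inner_div_le_norm (h0 : (0 : E) ∉ D) (u : E) :
    ∀ r ∈ (fun d => ⟪u, d⟫ / ‖d‖) '' D, r ≤ ‖u‖ := by
  rintro r ⟨d, hd, rfl⟩
  rw [div_le_iff₀ (norm_pos_of_mem h0 hd)]
  exact real_inner_le_norm u d

lemma neg_norm_le_inner_div (h0 : (0 : E) ∉ D) (u : E) :
    ∀ r ∈ (fun d => ⟪u, d⟫ / ‖d‖) '' D, -‖u‖ ≤ r := by
  rintro r ⟨d, hd, rfl⟩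
  rw [le_div_iff₀ (norm_pos_of_mem h0 hd)]
  have h := abs_real_inner_le_norm u d
  have h2 : -(‖u‖ * ‖d‖) ≤ ⟪u, d⟫ := neg_le_of_abs_le h
  linarith

lemma fsup_bddAbove (h0 : (0 : E) ∉ D) (u : E) :
    BddAbove ((fun d => ⟪u, d⟫ / ‖d‖) '' D) :=
  ⟨‖u‖, inner_div_le_norm h0 u⟩

lemma fsup_le_norm (h0 : (0 : E) ∉ D) (hne : D.Nonempty) (u : E) :
    fsup D u ≤ ‖u‖ :=
  csSup_le (hne.image _) (inner_div_le_norm h0 u)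

lemma neg_norm_le_fsup (h0 : (0 : E) ∉ D) (hne : D.Nonempty) (u : E) :
    -‖u‖ ≤ fsup D u := by
  obtain ⟨d, hd⟩ := hne
  refine le_trans (neg_norm_le_inner_div h0 u _ ⟨d, hd, rfl⟩) ?_
  exact le_csSup (fsup_bddAbove h0 u) ⟨d, hd, rfl⟩

lemma fsup_sub_le (h0 : (0 : E) ∉ D) (hne : D.Nonempty) (u v : E) :
    fsup D u - fsup D v ≤ ‖u - v‖ := by
  rw [sub_le_iff_le_add]
  refine csSup_le (hne.image _) ?_
  rintro r ⟨d, hd, rfl⟩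
  have hdn := norm_pos_of_mem h0 hd
  have key : ⟪u, d⟫ / ‖d‖ = ⟪v, d⟫ / ‖d‖ + ⟪u - v, d⟫ / ‖d‖ := by
    rw [inner_sub_left]; ring
  show ⟪u, d⟫ / ‖d‖ ≤ ‖u - v‖ + fsup D v
  have h1 : ⟪v, d⟫ / ‖d‖ ≤ fsup D v := le_csSup (fsup_bddAbove h0 v) ⟨d, hd, rfl⟩
  have h2 : ⟪u - v, d⟫ / ‖d‖ ≤ ‖u - v‖ := inner_div_le_norm h0 (u - v) _ ⟨d, hd, rfl⟩
  rw [key]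
  linarith

lemma fsup_lipschitz (h0 : (0 : E) ∉ D) (hne : D.Nonempty) :
    LipschitzWith 1 (fsup D) := by
  refine LipschitzWith.of_dist_le_mul fun u v => ?_
  rw [NNReal.coe_one, one_mul, Real.dist_eq, dist_eq_norm]
  rw [abs_sub_le_iff]
  constructor
  · exact fsup_sub_le h0 hne u v
  · rw [← norm_neg, neg_sub]
    exact fsup_sub_le h0 hne v u

end fsup

section key
variable {E : Type*} [NormedAddCommGroup E] [InnerProductSpace ℝ E] [FiniteDimensional ℝ E]

lemma pspan_eq_iff_cmRel_pos (D : Set E) (hne : D.Nonempty) (h0 : (0 : E) ∉ D)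
    (L : Submodule ℝ E) (hL : L ≠ ⊥) (hDL : D ⊆ (L : Set E)) :
    pspan D = (L : Set E) ↔ 0 < cmRel L D := by
  set S : Set E := {u | u ∈ L ∧ ‖u‖ = 1} with hS
  have hcm : cmRel L D = sInf (fsup D '' S) := rfl
  obtain ⟨x, hxL, hx0⟩ := (Submodule.ne_bot_iff L).mp hL
  have hSne : S.Nonempty := ⟨‖x‖⁻¹ • x, L.smul_mem _ hxL, norm_smul_inv_norm hx0⟩
  have hBB : BddBelow (fsup D '' S) := by
    refine ⟨-1, ?_⟩
    rintro b ⟨u, hu, rfl⟩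
    have h := neg_norm_le_fsup h0 hne u
    rw [hu.2] at h
    exact h
  constructor
  · intro hps
    have hclL : IsClosed ((L : Set E)) := L.closed_of_finiteDimensional
    have hSeq : S = (L : Set E) ∩ Metric.sphere 0 1 := by
      ext u
      simp [hS, mem_sphere_zero_iff_norm]
    have hScomp : IsCompact S := hSeq ▸ (isCompact_sphere (0 : E) 1).inter_left hclL
    have hcont : ContinuousOn (fsup D) S :=
      (fsup_lipschitz h0 hne).continuous.continuousOn
    obtain ⟨u₀, hu₀S, hmin⟩ := hScomp.exists_isMinOn hSne hcont
    have hu₀mem : u₀ ∈ pspan D := by rw [hps]; exact hu₀S.1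
    obtain ⟨k, d, c, hd, hc, hrep⟩ := hu₀mem
    have hinner : (1 : ℝ) = ∑ i, c i * ⟪u₀, d i⟫ := by
      have h1 : ⟪u₀, u₀⟫ = 1 := by
        rw [real_inner_self_eq_norm_mul_norm, hu₀S.2]; ring
      calc (1 : ℝ) = ⟪u₀, u₀⟫ := h1.symm
        _ = ⟪u₀, ∑ i, c i • d i⟫ := by rw [← hrep]
        _ = ∑ i, c i * ⟪u₀, d i⟫ := by
            rw [inner_sum]
            exact Finset.sum_congr rfl fun i _ => real_inner_smul_right _ _ _
    have hex : ∃ i, 0 < c i * ⟪u₀, d i⟫ := by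
      by_contra h
      push_neg at h
      have hle : ∑ i, c i * ⟪u₀, d i⟫ ≤ 0 := Finset.sum_nonpos fun i _ => h i
      linarith
    obtain ⟨i, hi⟩ := hex
    have hip : 0 < ⟪u₀, d i⟫ := by
      by_contra h
      push_neg at h
      nlinarith [hc i]
    have hfpos : 0 < fsup D u₀ :=
      lt_of_lt_of_le (div_pos hip (norm_pos_of_mem h0 (hd i)))
        (le_csSup (fsup_bddAbove h0 u₀) ⟨d i, hd i, rfl⟩)
    rw [hcm]
    refine lt_of_lt_of_le hfpos (le_csInf (hSne.image _) ?_)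
    rintro b ⟨u, hu, rfl⟩
    exact hmin hu
  · intro hcmpos
    have hsub : pspan D ⊆ (L : Set E) := pspan_subset hDL
    refine pspan_eq_of_closure_eq D L hsub ?_
    by_contra hclne
    have hclsub : closure (pspan D) ⊆ (L : Set E) :=
      closure_minimal hsub L.closed_of_finiteDimensional
    obtain ⟨x', hx'⟩ := Set.exists_of_ssubset (ssubset_of_subset_of_ne hclsub hclne)
    obtain ⟨hx'L, hx'cl⟩ := hx'
    set cone : ConvexCone ℝ E :=
      { carrier := pspan D
        smul_mem' := fun _ hcpos _ hx => pspan_smul_mem (le_of_lt hcpos) hx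
        add_mem' := fun _ hx _ hy => pspan_add_mem hx hy } with hcone
    set K := cone.closure with hK
    have hKset : (K : Set E) = closure (pspan D) := cone.coe_closure
    have hKne : (K : Set E).Nonempty :=
      ⟨0, by rw [hKset]; exact subset_closure (pspan_zero_mem D)⟩
    have hKcl : IsClosed (K : Set E) := by rw [hKset]; exact isClosed_closure
    have hbK : x' ∉ K := fun h => hx'cl (hKset ▸ h)
    have hK0 : (0 : E) ∈ K := by
      show (0 : E) ∈ (K : Set E); rw [hKset]; exact subset_closure (pspan_zero_mem D)
    let C : ProperCone ℝ E :=
      { carrier := (K : Set E)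
        add_mem' := fun ha hb => K.add_mem ha hb
        zero_mem' := hK0
        smul_mem' := fun c x hx => by
          change ((c : ℝ) • x) ∈ (K : Set E)
          rcases eq_or_lt_of_le c.2 with h | h
          · rw [← h, zero_smul]; exact hK0
          · exact K.smul_mem h hx
        isClosed' := hKcl }
    obtain ⟨y, hy1, hy2⟩ :=
      ProperCone.hyperplane_separation' C hbK
    set v : E := (L.orthogonalProjectionOnto y : E) with hv
    have hvL : v ∈ L := SetLike.coe_mem _
    have hinner_eq : ∀ w, w ∈ L → ⟪y, w⟫ = ⟪v, w⟫ := by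
      intro w hw
      have h : ⟪y - v, w⟫ = 0 := L.starProjection_inner_eq_zero y w hw
      rw [inner_sub_left] at h
      linarith
    have hvx : ⟪v, x'⟫ < 0 := by rw [← hinner_eq x' hx'L]; linarith [real_inner_comm x' y]
    have hvne : v ≠ 0 := by
      intro h
      rw [h, inner_zero_left] at hvx
      exact lt_irrefl 0 hvx
    set u : E := -(‖v‖⁻¹ • v) with hu
    have huL : u ∈ L := L.neg_mem (L.smul_mem _ hvL)
    have hunorm : ‖u‖ = 1 := by rw [hu, norm_neg]; exact norm_smul_inv_norm hvne
    have hud : ∀ d' ∈ D, ⟪u, d'⟫ ≤ 0 := by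
      intro d' hd'
      have hd'K : d' ∈ K := by
        show d' ∈ (K : Set E)
        rw [hKset]
        exact subset_closure (subset_pspan hd')
      have h1 : 0 ≤ ⟪d', y⟫ := hy1 d' hd'K
      have h2 : 0 ≤ ⟪v, d'⟫ := by
        rw [← hinner_eq d' (hDL hd'), real_inner_comm]
        exact h1
      rw [hu, inner_neg_left, real_inner_smul_left]
      have hnn : 0 ≤ ‖v‖⁻¹ * ⟪v, d'⟫ := mul_nonneg (inv_nonneg.2 (norm_nonneg v)) h2
      linarith
    have hfle : fsup D u ≤ 0 := by
      refine csSup_le (hne.image _) ?_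
      rintro r ⟨d', hd', rfl⟩
      exact div_nonpos_of_nonpos_of_nonneg (hud d' hd') (norm_nonneg d')
    have hle : cmRel L D ≤ fsup D u := by
      rw [hcm]
      exact csInf_le hBB ⟨u, ⟨huL, hunorm⟩, rfl⟩
    linarith

end key


theorem stmt10 {n : ℕ} (D : Set (EuclideanSpace ℝ (Fin n))) (hne : D.Nonempty)
    (h0 : (0 : EuclideanSpace ℝ (Fin n)) ∉ D)
    (L : Submodule ℝ (EuclideanSpace ℝ (Fin n))) (hL : L ≠ ⊥)
    (hDL : D ⊆ (L : Set (EuclideanSpace ℝ (Fin n)))) :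
    (pspan D = (L : Set (EuclideanSpace ℝ (Fin n))) ↔ 0 < cmRel L D) ∧
    (pspan D = (Submodule.span ℝ D : Set (EuclideanSpace ℝ (Fin n))) ↔
      0 < cmRel (Submodule.span ℝ D) D) := by
  constructor
  · exact pspan_eq_iff_cmRel_pos D hne h0 L hL hDL
  · obtain ⟨d, hd⟩ := hne
    have hL' : Submodule.span ℝ D ≠ ⊥ :=
      (Submodule.ne_bot_iff _).mpr ⟨d, Submodule.subset_span hd, fun h => h0 (h ▸ hd)⟩
    exact pspan_eq_iff_cmRel_pos D ⟨d, hd⟩ h0 _ hL' Submodule.subset_span
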